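/- arXiv:1804.05562 — 2 statements merged into one kernel-verified Lean document; each statement's English description precedes it below -/
import Mathlib

section
/- A finite-dimensional nilpotent Lie algebra g is of class T if and only if there exist an integer k ≥ 0 and an indecomposable nilpotent Lie algebra g₀ of class T such that g is isomorphic to a_k × g₀, where a_k is the k-dimensional abelian Lie algebra. -/
open Module

/-- The product of two Lie rings. -/
instance prodLieRing {L₁ L₂ : Type*} [LieRing L₁] [LieRing L₂] : LieRing (L₁ × L₂) where
  bracket x y := (⁅x.1, y.1⁆, ⁅x.2, y.2⁆)
  add_lie x y z := by ext <;> simp [add_lie]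
  lie_add x y z := by ext <;> simp [lie_add]
  lie_self x := by ext <;> simp
  leibniz_lie x y z := by
    ext
    · exact leibniz_lie x.1 y.1 z.1
    · exact leibniz_lie x.2 y.2 z.2

/-- The product of two Lie algebras. -/
instance prodLieAlgebra {L₁ L₂ : Type*} [LieRing L₁] [LieRing L₂]
    [LieAlgebra ℝ L₁] [LieAlgebra ℝ L₂] : LieAlgebra ℝ (L₁ × L₂) where
  lie_smul t x y := by
    ext
    · exact lie_smul t x.1 y.1
    · exact lie_smul t x.2 y.2

/-- The coadjoint isotropy subalgebra `g(ξ) = {X ∈ g : ξ([X,Y]) = 0 for all Y}`. -/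
noncomputable def coadjointIsotropy {L : Type*} [LieRing L] [LieAlgebra ℝ L]
    (ξ : Module.Dual ℝ L) : Submodule ℝ L where
  carrier := {X | ∀ Y : L, ξ ⁅X, Y⁆ = 0}
  add_mem' := by
    intro a b ha hb Y
    simp [add_lie, ha Y, hb Y]
  zero_mem' := by intro Y; simp
  smul_mem' := by
    intro c a ha Y
    simp [smul_lie, ha Y]

/-- `ind g := min {dim g(ξ) : ξ ∈ g*}`. -/
noncomputable def lieIndex (L : Type*) [LieRing L] [LieAlgebra ℝ L] : ℕ :=
  sInf (Set.range fun ξ : Module.Dual ℝ L => finrank ℝ (coadjointIsotropy ξ))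

/-- `g` is of class `T` if `dim g(ξ) = ind g` for every `ξ ∈ g*` not vanishing on `[g,g]`. -/
def IsClassT (L : Type*) [LieRing L] [LieAlgebra ℝ L] : Prop :=
  ∀ ξ : Module.Dual ℝ L,
    ¬ (∀ x ∈ LieAlgebra.derivedSeries ℝ L 1, ξ x = 0) →
      finrank ℝ (coadjointIsotropy ξ) = lieIndex L

/-- A bundled finite-dimensional real Lie algebra. -/
structure FinLieAlg where
  carrier : Type
  [ring : LieRing carrier]
  [alg : LieAlgebra ℝ carrier]
  [fin : FiniteDimensional ℝ carrier]

attribute [instance] FinLieAlg.ring FinLieAlg.alg FinLieAlg.fin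

/-- A Lie algebra is indecomposable if it is not isomorphic to a direct product of two
Lie algebras each of positive dimension. -/
def FinLieAlg.Indecomposable (P : FinLieAlg) : Prop :=
  ¬ ∃ (Q R : FinLieAlg), 0 < finrank ℝ Q.carrier ∧ 0 < finrank ℝ R.carrier ∧
      Nonempty (P.carrier ≃ₗ⁅ℝ⁆ Q.carrier × R.carrier)

section DerivedHelpers
open LieAlgebra

variable {L₁ L₂ L : Type*} [LieRing L₁] [LieRing L₂] [LieRing L]
  [LieAlgebra ℝ L₁] [LieAlgebra ℝ L₂] [LieAlgebra ℝ L]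

lemma derived_one_eq : derivedSeries ℝ L 1 = ⁅(⊤ : LieIdeal ℝ L), ⊤⁆ := by
  rw [derivedSeries_def, derivedSeriesOfIdeal_succ, derivedSeriesOfIdeal_zero]

lemma derived_map (f : L₁ →ₗ⁅ℝ⁆ L₂) {x : L₁} (hx : x ∈ derivedSeries ℝ L₁ 1) :
    f x ∈ derivedSeries ℝ L₂ 1 := by
  rw [derived_one_eq, ← LieSubmodule.mem_toSubmodule,
    LieSubmodule.lieIdeal_oper_eq_linear_span'] at hx
  rw [derived_one_eq]
  induction hx using Submodule.span_induction with
  | mem m hm =>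
    obtain ⟨a, -, b, -, rfl⟩ := hm
    rw [LieHom.map_lie]
    exact LieSubmodule.lie_mem_lie (LieSubmodule.mem_top _) (LieSubmodule.mem_top _)
  | zero => rw [map_zero]; exact zero_mem _
  | add a b _ _ ha hb => rw [map_add]; exact add_mem ha hb
  | smul c a _ ha => rw [map_smul]; exact Submodule.smul_mem _ c ha

lemma derived_abelian_eq_zero [IsLieAbelian L] {x : L} (hx : x ∈ derivedSeries ℝ L 1) :
    x = 0 := by
  rw [derived_one_eq, ← LieSubmodule.mem_toSubmodule,
    LieSubmodule.lieIdeal_oper_eq_linear_span'] at hx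
  induction hx using Submodule.span_induction with
  | mem m hm => obtain ⟨a, -, b, -, rfl⟩ := hm; exact trivial_lie_zero _ _ _ _
  | zero => rfl
  | add a b _ _ ha hb => rw [ha, hb, add_zero]
  | smul c a _ ha => rw [ha, smul_zero]

lemma derived_self_mem {x y : L} : ⁅x, y⁆ ∈ derivedSeries ℝ L 1 := by
  rw [derived_one_eq]
  exact LieSubmodule.lie_mem_lie (LieSubmodule.mem_top _) (LieSubmodule.mem_top _)

end DerivedHelpers

section Products
open LieAlgebra

variable {L₁ L₂ : Type*} [LieRing L₁] [LieRing L₂] [LieAlgebra ℝ L₁] [LieAlgebra ℝ L₂]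

/-- First component of a functional on a product. -/
noncomputable def dualFst (ξ : Dual ℝ (L₁ × L₂)) : Dual ℝ L₁ := ξ.comp (LinearMap.inl ℝ L₁ L₂)
/-- Second component of a functional on a product. -/
noncomputable def dualSnd (ξ : Dual ℝ (L₁ × L₂)) : Dual ℝ L₂ := ξ.comp (LinearMap.inr ℝ L₁ L₂)

lemma dual_split (ξ : Dual ℝ (L₁ × L₂)) (a : L₁) (b : L₂) :
    ξ (a, b) = dualFst ξ a + dualSnd ξ b := by
  have : ((a, b) : L₁ × L₂) = (a, 0) + (0, b) := by ext <;> simp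
  rw [this, map_add]; rfl

omit [LieAlgebra ℝ L₁] [LieAlgebra ℝ L₂] in
lemma prod_bracket (x y : L₁ × L₂) : ⁅x, y⁆ = ((⁅x.1, y.1⁆ : L₁), (⁅x.2, y.2⁆ : L₂)) := rfl

lemma iso_prod (ξ : Dual ℝ (L₁ × L₂)) :
    coadjointIsotropy ξ = (coadjointIsotropy (dualFst ξ)).prod (coadjointIsotropy (dualSnd ξ)) := by
  ext ⟨a, b⟩
  constructor
  · intro h
    refine ⟨fun y => ?_, fun y => ?_⟩
    · have := h (y, 0)
      rw [prod_bracket, dual_split] at this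
      simpa using this
    · have := h (0, y)
      rw [prod_bracket, dual_split] at this
      simpa using this
  · rintro ⟨h1, h2⟩ ⟨y1, y2⟩
    rw [prod_bracket, dual_split]
    have e1 := h1 y1
    have e2 := h2 y2
    simp only [dualFst, dualSnd, LinearMap.comp_apply] at e1 e2 ⊢
    rw [e1, e2, add_zero]

/-- The obvious linear equivalence between `p.prod q` and `p × q`. -/
noncomputable def prodSubEquiv (p : Submodule ℝ L₁) (q : Submodule ℝ L₂) :
    (p.prod q) ≃ₗ[ℝ] p × q where
  toFun x := (⟨x.1.1, x.2.1⟩, ⟨x.1.2, x.2.2⟩)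
  invFun y := ⟨(y.1.1, y.2.1), y.1.2, y.2.2⟩
  left_inv _ := rfl
  right_inv _ := rfl
  map_add' _ _ := rfl
  map_smul' _ _ := rfl

lemma finrank_prodSub [FiniteDimensional ℝ L₁] [FiniteDimensional ℝ L₂]
    (p : Submodule ℝ L₁) (q : Submodule ℝ L₂) :
    finrank ℝ (p.prod q) = finrank ℝ p + finrank ℝ q := by
  rw [(prodSubEquiv p q).finrank_eq, Module.finrank_prod]

lemma finrank_iso_prod [FiniteDimensional ℝ L₁] [FiniteDimensional ℝ L₂]
    (ξ : Dual ℝ (L₁ × L₂)) :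
    finrank ℝ (coadjointIsotropy ξ)
      = finrank ℝ (coadjointIsotropy (dualFst ξ)) + finrank ℝ (coadjointIsotropy (dualSnd ξ)) := by
  rw [iso_prod, finrank_prodSub]

lemma lieIndex_exists (L : Type*) [LieRing L] [LieAlgebra ℝ L] :
    ∃ ξ : Dual ℝ L, finrank ℝ (coadjointIsotropy ξ) = lieIndex L := by
  have h : (Set.range fun ξ : Dual ℝ L => finrank ℝ (coadjointIsotropy ξ)).Nonempty :=
    ⟨_, ⟨0, rfl⟩⟩
  exact Nat.sInf_mem h

lemma lieIndex_le {L : Type*} [LieRing L] [LieAlgebra ℝ L] (ξ : Dual ℝ L) :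
    lieIndex L ≤ finrank ℝ (coadjointIsotropy ξ) :=
  Nat.sInf_le ⟨ξ, rfl⟩

lemma lieIndex_prod [FiniteDimensional ℝ L₁] [FiniteDimensional ℝ L₂] :
    lieIndex (L₁ × L₂) = lieIndex L₁ + lieIndex L₂ := by
  apply le_antisymm
  · obtain ⟨ξ1, h1⟩ := lieIndex_exists L₁
    obtain ⟨ξ2, h2⟩ := lieIndex_exists L₂
    have key : dualFst (ξ1.comp (LinearMap.fst ℝ L₁ L₂) + ξ2.comp (LinearMap.snd ℝ L₁ L₂)) = ξ1
        ∧ dualSnd (ξ1.comp (LinearMap.fst ℝ L₁ L₂) + ξ2.comp (LinearMap.snd ℝ L₁ L₂)) = ξ2 := by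
      constructor <;> ext v <;> simp [dualFst, dualSnd]
    calc lieIndex (L₁ × L₂) ≤ finrank ℝ (coadjointIsotropy
          (ξ1.comp (LinearMap.fst ℝ L₁ L₂) + ξ2.comp (LinearMap.snd ℝ L₁ L₂))) := lieIndex_le _
      _ = lieIndex L₁ + lieIndex L₂ := by rw [finrank_iso_prod, key.1, key.2, h1, h2]
  · obtain ⟨ξ, hξ⟩ := lieIndex_exists (L₁ × L₂)
    rw [← hξ, finrank_iso_prod]
    exact Nat.add_le_add (lieIndex_le _) (lieIndex_le _)

end Products

section AbelianNonabelian
open LieAlgebra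

variable {L : Type*} [LieRing L] [LieAlgebra ℝ L]

lemma iso_abelian [IsLieAbelian L] (ξ : Dual ℝ L) : coadjointIsotropy ξ = ⊤ := by
  ext x
  simp only [Submodule.mem_top, iff_true]
  intro y
  rw [trivial_lie_zero, map_zero]

lemma lieIndex_abelian [IsLieAbelian L] [FiniteDimensional ℝ L] :
    lieIndex L = finrank ℝ L := by
  have h : ∀ ξ : Dual ℝ L, finrank ℝ (coadjointIsotropy ξ) = finrank ℝ L := fun ξ => by
    rw [iso_abelian, finrank_top]
  unfold lieIndex
  have : (Set.range fun ξ : Dual ℝ L => finrank ℝ (coadjointIsotropy ξ)) = {finrank ℝ L} := by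
    ext n
    simp only [Set.mem_range, Set.mem_singleton_iff]
    exact ⟨fun ⟨ξ, hξ⟩ => hξ ▸ (h ξ), fun hn => ⟨0, (h 0).trans hn.symm⟩⟩
  rw [this, csInf_singleton]

lemma isClassT_abelian [IsLieAbelian L] : IsClassT L := by
  intro ξ hξ
  exact absurd (fun x hx => by rw [derived_abelian_eq_zero hx, map_zero]) hξ

lemma exists_dual_ne_of_nonabelian [FiniteDimensional ℝ L] (h : ¬ IsLieAbelian L) :
    ∃ (ξ : Dual ℝ L) (x : L), x ∈ derivedSeries ℝ L 1 ∧ ξ x ≠ 0 := by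
  have : ∃ a b : L, ⁅a, b⁆ ≠ 0 := by
    by_contra hc
    push_neg at hc
    exact h ⟨fun a b => hc a b⟩
  obtain ⟨a, b, hab⟩ := this
  have : ¬ ∀ φ : Dual ℝ L, φ ⁅a, b⁆ = 0 := by
    rw [Module.forall_dual_apply_eq_zero_iff]
    exact hab
  push_neg at this
  obtain ⟨φ, hφ⟩ := this
  exact ⟨φ, ⁅a, b⁆, derived_self_mem, hφ⟩

lemma vanish_of_isotropy_top {ξ : Dual ℝ L} (htop : coadjointIsotropy ξ = ⊤)
    {z : L} (hz : z ∈ derivedSeries ℝ L 1) : ξ z = 0 := by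
  rw [derived_one_eq, ← LieSubmodule.mem_toSubmodule,
    LieSubmodule.lieIdeal_oper_eq_linear_span'] at hz
  induction hz using Submodule.span_induction with
  | mem m hm =>
    obtain ⟨u, -, v, -, rfl⟩ := hm
    have hu : u ∈ coadjointIsotropy ξ := htop ▸ Submodule.mem_top
    exact hu v
  | zero => exact map_zero ξ
  | add u v _ _ hu hv => rw [map_add, hu, hv, add_zero]
  | smul c u _ hu => rw [map_smul, hu, smul_zero]

lemma lieIndex_lt_of_nonabelian [FiniteDimensional ℝ L] (h : ¬ IsLieAbelian L) :
    lieIndex L < finrank ℝ L := by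
  obtain ⟨ξ, x, hx, hξx⟩ := exists_dual_ne_of_nonabelian h
  have hne : coadjointIsotropy ξ ≠ ⊤ := fun htop => hξx (vanish_of_isotropy_top htop hx)
  calc lieIndex L ≤ finrank ℝ (coadjointIsotropy ξ) := lieIndex_le _
    _ < finrank ℝ L := Submodule.finrank_lt hne

end AbelianNonabelian

section Transport
open LieAlgebra

variable {L₁ L₂ : Type*} [LieRing L₁] [LieRing L₂] [LieAlgebra ℝ L₁] [LieAlgebra ℝ L₂]

/-- `inl` as a Lie algebra homomorphism. -/
def lieInl : L₁ →ₗ⁅ℝ⁆ L₁ × L₂ :=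
  { LinearMap.inl ℝ L₁ L₂ with
    map_lie' := by intro x y; ext <;> simp [prod_bracket] }

/-- `inr` as a Lie algebra homomorphism. -/
def lieInr : L₂ →ₗ⁅ℝ⁆ L₁ × L₂ :=
  { LinearMap.inr ℝ L₁ L₂ with
    map_lie' := by intro x y; ext <;> simp [prod_bracket] }

/-- `fst` as a Lie algebra homomorphism. -/
def lieFst : L₁ × L₂ →ₗ⁅ℝ⁆ L₁ :=
  { LinearMap.fst ℝ L₁ L₂ with map_lie' := by intro x y; rfl }

/-- `snd` as a Lie algebra homomorphism. -/
def lieSnd : L₁ × L₂ →ₗ⁅ℝ⁆ L₂ :=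
  { LinearMap.snd ℝ L₁ L₂ with map_lie' := by intro x y; rfl }

lemma iso_equiv_eq (e : L₁ ≃ₗ⁅ℝ⁆ L₂) (ξ : Dual ℝ L₂) :
    coadjointIsotropy (ξ ∘ₗ (e.toLinearEquiv : L₁ →ₗ[ℝ] L₂))
      = (coadjointIsotropy ξ).comap (e.toLinearEquiv : L₁ →ₗ[ℝ] L₂) := by
  ext x
  constructor
  · intro h y
    obtain ⟨y', rfl⟩ := e.toLinearEquiv.surjective y
    have := h y'
    simpa [LieEquiv.map_lie] using this
  · intro h y
    have := h (e y)
    simpa [LieEquiv.map_lie] using this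

lemma finrank_iso_equiv [FiniteDimensional ℝ L₁] [FiniteDimensional ℝ L₂]
    (e : L₁ ≃ₗ⁅ℝ⁆ L₂) (ξ : Dual ℝ L₂) :
    finrank ℝ (coadjointIsotropy (ξ ∘ₗ (e.toLinearEquiv : L₁ →ₗ[ℝ] L₂)))
      = finrank ℝ (coadjointIsotropy ξ) := by
  rw [iso_equiv_eq, Submodule.comap_equiv_eq_map_symm]
  exact LinearEquiv.finrank_map_eq _ _

lemma lieIndex_congr [FiniteDimensional ℝ L₁] [FiniteDimensional ℝ L₂] (e : L₁ ≃ₗ⁅ℝ⁆ L₂) :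
    lieIndex L₁ = lieIndex L₂ := by
  unfold lieIndex
  congr 1
  ext n
  simp only [Set.mem_range]
  constructor
  · rintro ⟨ξ, rfl⟩
    refine ⟨ξ ∘ₗ (e.symm.toLinearEquiv : L₂ →ₗ[ℝ] L₁), ?_⟩
    rw [finrank_iso_equiv e.symm]
  · rintro ⟨ξ, rfl⟩
    exact ⟨ξ ∘ₗ (e.toLinearEquiv : L₁ →ₗ[ℝ] L₂), finrank_iso_equiv e ξ⟩

lemma isClassT_congr [FiniteDimensional ℝ L₁] [FiniteDimensional ℝ L₂]
    (e : L₁ ≃ₗ⁅ℝ⁆ L₂) (h : IsClassT L₁) : IsClassT L₂ := by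
  intro ξ hξ
  have hξ' : ¬ ∀ x ∈ derivedSeries ℝ L₁ 1, (ξ ∘ₗ (e.toLinearEquiv : L₁ →ₗ[ℝ] L₂)) x = 0 := by
    intro hall
    apply hξ
    intro x hx
    have := hall (e.symm x) (derived_map e.symm.toLieHom hx)
    simpa using this
  have := h _ hξ'
  rw [finrank_iso_equiv e ξ] at this
  rw [this, lieIndex_congr e]

end Transport

section Equivs
open LieAlgebra

variable {L₁ L₂ L₃ L₄ : Type*} [LieRing L₁] [LieRing L₂] [LieRing L₃] [LieRing L₄]
  [LieAlgebra ℝ L₁] [LieAlgebra ℝ L₂] [LieAlgebra ℝ L₃] [LieAlgebra ℝ L₄]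

instance prod_isLieAbelian [IsLieAbelian L₁] [IsLieAbelian L₂] : IsLieAbelian (L₁ × L₂) :=
  ⟨fun x y => by
    have : (⁅x, y⁆ : L₁ × L₂) = (⁅x.1, y.1⁆, ⁅x.2, y.2⁆) := rfl
    rw [this, trivial_lie_zero, trivial_lie_zero]; rfl⟩

/-- Product of two Lie algebra equivalences. -/
noncomputable def lieProdCongr (e1 : L₁ ≃ₗ⁅ℝ⁆ L₂) (e2 : L₃ ≃ₗ⁅ℝ⁆ L₄) :
    (L₁ × L₃) ≃ₗ⁅ℝ⁆ L₂ × L₄ :=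
  { (LinearEquiv.prodCongr e1.toLinearEquiv e2.toLinearEquiv) with
    map_lie' := by
      intro x y
      ext
      · exact e1.map_lie x.1 y.1
      · exact e2.map_lie x.2 y.2 }

/-- Commutativity of Lie algebra products. -/
noncomputable def lieProdComm : (L₁ × L₂) ≃ₗ⁅ℝ⁆ L₂ × L₁ :=
  { LinearEquiv.prodComm ℝ L₁ L₂ with map_lie' := by intro x y; rfl }

/-- Associativity of Lie algebra products. -/
noncomputable def lieProdAssoc : ((L₁ × L₂) × L₃) ≃ₗ⁅ℝ⁆ L₁ × (L₂ × L₃) :=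
  { LinearEquiv.prodAssoc ℝ L₁ L₂ L₃ with map_lie' := by intro x y; rfl }

end Equivs

namespace PUnit

instance : LieRing PUnit where
  bracket _ _ := PUnit.unit
  add_lie _ _ _ := rfl
  lie_add _ _ _ := rfl
  lie_self _ := rfl
  leibniz_lie _ _ _ := rfl

instance : LieAlgebra ℝ PUnit where
  lie_smul _ _ _ := rfl

instance : IsLieAbelian PUnit := ⟨fun _ _ => rfl⟩

end PUnit

/-- Any Lie algebra is isomorphic to `PUnit ×` itself. -/
noncomputable def punitProdLie (L : Type*) [LieRing L] [LieAlgebra ℝ L] :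
    L ≃ₗ⁅ℝ⁆ PUnit.{1} × L :=
  { toFun := fun x => (PUnit.unit, x)
    map_add' := fun _ _ => rfl
    map_smul' := fun _ _ => rfl
    map_lie' := rfl
    invFun := Prod.snd
    left_inv := fun _ => rfl
    right_inv := fun _ => rfl }

section Structural
open LieAlgebra

variable {A P Q R : Type*} [LieRing A] [LieRing P] [LieRing Q] [LieRing R]
  [LieAlgebra ℝ A] [LieAlgebra ℝ P] [LieAlgebra ℝ Q] [LieAlgebra ℝ R]

lemma iso_zero {L : Type*} [LieRing L] [LieAlgebra ℝ L] :
    coadjointIsotropy (0 : Dual ℝ L) = ⊤ := by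
  ext x; simp only [Submodule.mem_top, iff_true]; intro y; rfl

lemma isClassT_prod_of_abelian [IsLieAbelian A] [FiniteDimensional ℝ A] [FiniteDimensional ℝ P]
    (hP : IsClassT P) : IsClassT (A × P) := by
  intro ξ hξ
  have hsnd : ¬ ∀ x ∈ derivedSeries ℝ P 1, dualSnd ξ x = 0 := by
    intro hall
    apply hξ
    intro x hx
    have h1 : x.1 = 0 := derived_abelian_eq_zero (derived_map lieFst hx)
    have h2 : x.2 ∈ derivedSeries ℝ P 1 := derived_map lieSnd hx
    have hx' : ξ x = ξ (x.1, x.2) := rfl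
    rw [hx', dual_split, h1, map_zero, zero_add]
    exact hall _ h2
  have hmain := hP _ hsnd
  rw [finrank_iso_prod, iso_abelian (dualFst ξ), finrank_top, hmain, lieIndex_prod,
    lieIndex_abelian (L := A)]

lemma isClassT_factor_of_abelian [IsLieAbelian A] [FiniteDimensional ℝ A] [FiniteDimensional ℝ P]
    (h : IsClassT (A × P)) : IsClassT P := by
  intro ξ2 hξ2
  push_neg at hξ2
  obtain ⟨p, hp, hne⟩ := hξ2
  set ξ : Dual ℝ (A × P) := ξ2 ∘ₗ LinearMap.snd ℝ A P with hξdef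
  have hf : dualFst ξ = 0 := by ext a; simp [hξdef, dualFst]
  have hs : dualSnd ξ = ξ2 := by ext q; simp [hξdef, dualSnd]
  have hcond : ¬ ∀ x ∈ derivedSeries ℝ (A × P) 1, ξ x = 0 := by
    intro hall
    exact hne (by simpa [hξdef] using hall ((0 : A), p) (derived_map lieInr hp))
  have heq := h ξ hcond
  rw [finrank_iso_prod, hf, hs, iso_zero, finrank_top, lieIndex_prod, lieIndex_abelian (L := A)] at heq
  exact Nat.add_left_cancel heq

lemma not_isClassT_of_two_nonabelian [FiniteDimensional ℝ Q] [FiniteDimensional ℝ R]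
    (hQ : ¬ IsLieAbelian Q) (hR : ¬ IsLieAbelian R) : ¬ IsClassT (Q × R) := by
  intro h
  obtain ⟨ξ1, x, hx, hξx⟩ := exists_dual_ne_of_nonabelian hQ
  set ξ : Dual ℝ (Q × R) := ξ1 ∘ₗ LinearMap.fst ℝ Q R with hξdef
  have hf : dualFst ξ = ξ1 := by ext a; simp [hξdef, dualFst]
  have hs : dualSnd ξ = 0 := by ext a; simp [hξdef, dualSnd]
  have hcond : ¬ ∀ z ∈ derivedSeries ℝ (Q × R) 1, ξ z = 0 := by
    intro hall
    exact hξx (by simpa [hξdef] using hall (x, (0 : R)) (derived_map lieInl hx))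
  have heq := h ξ hcond
  rw [finrank_iso_prod, hf, hs, iso_zero, finrank_top, lieIndex_prod] at heq
  have h1 := lieIndex_le ξ1
  have h2 := lieIndex_lt_of_nonabelian hR
  omega

end Structural

section Main
open LieAlgebra

lemma main_aux (n : ℕ) :
    ∀ (M : FinLieAlg), finrank ℝ M.carrier = n → LieRing.IsNilpotent M.carrier →
      IsClassT M.carrier →
      ∃ (k : ℕ) (A P : FinLieAlg),
        IsLieAbelian A.carrier ∧ finrank ℝ A.carrier = k ∧
        LieRing.IsNilpotent P.carrier ∧ P.Indecomposable ∧ IsClassT P.carrier ∧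
        Nonempty (M.carrier ≃ₗ⁅ℝ⁆ A.carrier × P.carrier) := by
  induction n using Nat.strong_induction_on with
  | _ n ih =>
  intro M hdim hnil hT
  by_cases hind : M.Indecomposable
  · exact ⟨0, ⟨PUnit.{1}⟩, M, inferInstance, Module.finrank_zero_of_subsingleton, hnil, hind, hT,
      ⟨punitProdLie _⟩⟩
  · rw [FinLieAlg.Indecomposable, not_not] at hind
    obtain ⟨Q, R, hQpos, hRpos, ⟨e⟩⟩ := hind
    have hdimsum : finrank ℝ Q.carrier + finrank ℝ R.carrier = n := by
      rw [← hdim, e.toLinearEquiv.finrank_eq, Module.finrank_prod]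
    have hQnil : LieRing.IsNilpotent Q.carrier := by
      have hsurj : Function.Surjective (lieFst.comp e.toLieHom :
          M.carrier →ₗ⁅ℝ⁆ Q.carrier) := fun q =>
        ⟨e.symm (q, 0), by
          show (e (e.symm (q, 0))).1 = q
          rw [LieEquiv.apply_symm_apply]⟩
      exact Function.Surjective.lieAlgebra_isNilpotent hsurj
    have hRnil : LieRing.IsNilpotent R.carrier := by
      have hsurj : Function.Surjective (lieSnd.comp e.toLieHom :
          M.carrier →ₗ⁅ℝ⁆ R.carrier) := fun r =>
        ⟨e.symm (0, r), by
          show (e (e.symm (0, r))).2 = r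
          rw [LieEquiv.apply_symm_apply]⟩
      exact Function.Surjective.lieAlgebra_isNilpotent hsurj
    have hTQR : IsClassT (Q.carrier × R.carrier) := isClassT_congr e hT
    by_cases hQab : IsLieAbelian Q.carrier
    · haveI := hQab
      have hTR : IsClassT R.carrier := isClassT_factor_of_abelian hTQR
      obtain ⟨k', A', P', hA'ab, hA'dim, hP'nil, hP'ind, hP'T, ⟨e'⟩⟩ :=
        ih _ (by omega) R rfl hRnil hTR
      haveI := hA'ab
      refine ⟨finrank ℝ Q.carrier + k', ⟨Q.carrier × A'.carrier⟩, P', prod_isLieAbelian,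
        by rw [Module.finrank_prod, hA'dim], hP'nil, hP'ind, hP'T,
        ⟨e.trans (((lieProdCongr (LieEquiv.refl) e')).trans lieProdAssoc.symm)⟩⟩
    · by_cases hRab : IsLieAbelian R.carrier
      · haveI := hRab
        have e2 : M.carrier ≃ₗ⁅ℝ⁆ R.carrier × Q.carrier := e.trans lieProdComm
        have hTRQ : IsClassT (R.carrier × Q.carrier) := isClassT_congr e2 hT
        have hTQ : IsClassT Q.carrier := isClassT_factor_of_abelian hTRQ
        obtain ⟨k', A', P', hA'ab, hA'dim, hP'nil, hP'ind, hP'T, ⟨e'⟩⟩ :=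
          ih _ (by omega) Q rfl hQnil hTQ
        haveI := hA'ab
        refine ⟨finrank ℝ R.carrier + k', ⟨R.carrier × A'.carrier⟩, P', prod_isLieAbelian,
          by rw [Module.finrank_prod, hA'dim], hP'nil, hP'ind, hP'T,
          ⟨e2.trans (((lieProdCongr (LieEquiv.refl) e')).trans lieProdAssoc.symm)⟩⟩
      · exact absurd hTQR (not_isClassT_of_two_nonabelian hQab hRab)

end Main

/-- A finite-dimensional nilpotent Lie algebra is of class `T` iff it is isomorphic to
`a_k × g₀` with `a_k` abelian of dimension `k` and `g₀` indecomposable of class `T`. -/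
theorem stmt_6 {L : Type} [LieRing L] [LieAlgebra ℝ L] [FiniteDimensional ℝ L]
    (hnil : LieRing.IsNilpotent L) :
    IsClassT L ↔
      ∃ (k : ℕ) (A P : FinLieAlg),
        IsLieAbelian A.carrier ∧ finrank ℝ A.carrier = k ∧
        LieRing.IsNilpotent P.carrier ∧ P.Indecomposable ∧ IsClassT P.carrier ∧
        Nonempty (L ≃ₗ⁅ℝ⁆ A.carrier × P.carrier) := by
  constructor
  · intro hT
    exact main_aux (finrank ℝ L) ⟨L⟩ rfl hnil hT
  · rintro ⟨k, A, P, hAab, hAdim, hPnil, hPind, hPT, ⟨e⟩⟩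
    haveI := hAab
    exact isClassT_congr e.symm (isClassT_prod_of_abelian hPT)
end

section
/- Let g be the nilpotent Lie algebra n₅,₄ with basis X₁,…,X₅ and nonzero brackets [X₅,X₄]=X₃, [X₅,X₃]=X₂, [X₄,X₃]=X₁. Then g is 3-step nilpotent, dim[g,g] = 3, and for every ξ ∈ g* not vanishing on [g,g] the coadjoint isotropy g(ξ) = {X : ξ([X,g])=0} has dimension 3; hence ind g = 3 and g is of class T. -/
open Module

section Aux
variable {L : Type*} [LieRing L] [LieAlgebra ℝ L]

theorem n54_bracket (b : Basis (Fin 5) ℝ L)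
    (h1 : ⁅b 4, b 3⁆ = b 2) (h2 : ⁅b 4, b 2⁆ = b 1) (h3 : ⁅b 3, b 2⁆ = b 0)
    (h0 : ∀ i j : Fin 5, j < i → (i, j) ≠ (4, 3) → (i, j) ≠ (4, 2) → (i, j) ≠ (3, 2) →
      ⁅b i, b j⁆ = 0) (X Y : L) :
    ⁅X, Y⁆ = (b.repr X 3 * b.repr Y 2 - b.repr X 2 * b.repr Y 3) • b 0
      + (b.repr X 4 * b.repr Y 2 - b.repr X 2 * b.repr Y 4) • b 1
      + (b.repr X 4 * b.repr Y 3 - b.repr X 3 * b.repr Y 4) • b 2 := by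
  have e10 : ⁅b 1, b 0⁆ = 0 := h0 1 0 (by decide) (by decide) (by decide) (by decide)
  have e20 : ⁅b 2, b 0⁆ = 0 := h0 2 0 (by decide) (by decide) (by decide) (by decide)
  have e21 : ⁅b 2, b 1⁆ = 0 := h0 2 1 (by decide) (by decide) (by decide) (by decide)
  have e30 : ⁅b 3, b 0⁆ = 0 := h0 3 0 (by decide) (by decide) (by decide) (by decide)
  have e31 : ⁅b 3, b 1⁆ = 0 := h0 3 1 (by decide) (by decide) (by decide) (by decide)
  have e40 : ⁅b 4, b 0⁆ = 0 := h0 4 0 (by decide) (by decide) (by decide) (by decide)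
  have e41 : ⁅b 4, b 1⁆ = 0 := h0 4 1 (by decide) (by decide) (by decide) (by decide)
  have e01 : ⁅b 0, b 1⁆ = 0 := by rw [← lie_skew, e10, neg_zero]
  have e02 : ⁅b 0, b 2⁆ = 0 := by rw [← lie_skew, e20, neg_zero]
  have e03 : ⁅b 0, b 3⁆ = 0 := by rw [← lie_skew, e30, neg_zero]
  have e04 : ⁅b 0, b 4⁆ = 0 := by rw [← lie_skew, e40, neg_zero]
  have e12 : ⁅b 1, b 2⁆ = 0 := by rw [← lie_skew, e21, neg_zero]
  have e13 : ⁅b 1, b 3⁆ = 0 := by rw [← lie_skew, e31, neg_zero]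
  have e14 : ⁅b 1, b 4⁆ = 0 := by rw [← lie_skew, e41, neg_zero]
  have e23 : ⁅b 2, b 3⁆ = -b 0 := by rw [← lie_skew, h3]
  have e24 : ⁅b 2, b 4⁆ = -b 1 := by rw [← lie_skew, h2]
  have e34 : ⁅b 3, b 4⁆ = -b 2 := by rw [← lie_skew, h1]
  have hX := b.sum_repr X
  have hY := b.sum_repr Y
  rw [Fin.sum_univ_five] at hX hY
  conv_lhs => rw [← hX, ← hY]
  simp only [add_lie, lie_add, smul_lie, lie_smul, lie_self,
    e01, e02, e03, e04, e10, e12, e13, e14, e20, e21, e23, e24, e30, e31, e34,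
    e40, e41, h1, h2, h3, smul_zero, zero_add, add_zero, smul_neg]
  module

/-- Coordinates of an element of `span {b 0, b 1, b 2}` vanish at 3, 4. -/
theorem coordS1 (b : Basis (Fin 5) ℝ L) {X : L}
    (hX : X ∈ Submodule.span ℝ ({b 0, b 1, b 2} : Set L)) :
    b.repr X 3 = 0 ∧ b.repr X 4 = 0 := by
  have himg : (b '' {0, 1, 2} : Set L) = {b 0, b 1, b 2} := by
    simp [Set.image_insert_eq]
  rw [← himg] at hX
  have hsupp := b.repr_support_subset_of_mem_span _ hX
  constructor <;>
  · rw [← Finsupp.notMem_support_iff]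
    intro hmem
    have := hsupp hmem
    simp at this

/-- Coordinates of an element of `span {b 0, b 1}` vanish at 2, 3, 4. -/
theorem coordS2 (b : Basis (Fin 5) ℝ L) {X : L}
    (hX : X ∈ Submodule.span ℝ ({b 0, b 1} : Set L)) :
    b.repr X 2 = 0 ∧ b.repr X 3 = 0 ∧ b.repr X 4 = 0 := by
  have himg : (b '' {0, 1} : Set L) = {b 0, b 1} := by
    simp [Set.image_insert_eq]
  rw [← himg] at hX
  have hsupp := b.repr_support_subset_of_mem_span _ hX
  refine ⟨?_, ?_, ?_⟩ <;>
  · rw [← Finsupp.notMem_support_iff]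
    intro hmem
    have := hsupp hmem
    simp at this

theorem n54_derived (b : Basis (Fin 5) ℝ L)
    (h1 : ⁅b 4, b 3⁆ = b 2) (h2 : ⁅b 4, b 2⁆ = b 1) (h3 : ⁅b 3, b 2⁆ = b 0)
    (h0 : ∀ i j : Fin 5, j < i → (i, j) ≠ (4, 3) → (i, j) ≠ (4, 2) → (i, j) ≠ (3, 2) →
      ⁅b i, b j⁆ = 0) :
    (LieAlgebra.derivedSeries ℝ L 1).toSubmodule = Submodule.span ℝ ({b 0, b 1, b 2} : Set L) := by
  have hder : LieAlgebra.derivedSeries ℝ L 1 = ⁅(⊤ : LieIdeal ℝ L), (⊤ : LieIdeal ℝ L)⁆ := by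
    rw [LieAlgebra.derivedSeries_def, LieAlgebra.derivedSeriesOfIdeal_succ,
      LieAlgebra.derivedSeriesOfIdeal_zero]
  rw [hder, LieSubmodule.lieIdeal_oper_eq_linear_span']
  apply le_antisymm
  · rw [Submodule.span_le]
    rintro _ ⟨x, -, y, -, rfl⟩
    rw [n54_bracket b h1 h2 h3 h0]
    refine Submodule.add_mem _ (Submodule.add_mem _ ?_ ?_) ?_ <;>
      exact Submodule.smul_mem _ _ (Submodule.subset_span (by simp))
  · rw [Submodule.span_le]
    rintro x hx
    simp only [Set.mem_insert_iff, Set.mem_singleton_iff] at hx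
    rcases hx with rfl | rfl | rfl
    · exact Submodule.subset_span ⟨b 3, trivial, b 2, trivial, h3⟩
    · exact Submodule.subset_span ⟨b 4, trivial, b 2, trivial, h2⟩
    · exact Submodule.subset_span ⟨b 4, trivial, b 3, trivial, h1⟩

theorem n54_lcs1 (b : Basis (Fin 5) ℝ L)
    (h1 : ⁅b 4, b 3⁆ = b 2) (h2 : ⁅b 4, b 2⁆ = b 1) (h3 : ⁅b 3, b 2⁆ = b 0)
    (h0 : ∀ i j : Fin 5, j < i → (i, j) ≠ (4, 3) → (i, j) ≠ (4, 2) → (i, j) ≠ (3, 2) →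
      ⁅b i, b j⁆ = 0) :
    (LieModule.lowerCentralSeries ℝ L L 1).toSubmodule
      = Submodule.span ℝ ({b 0, b 1, b 2} : Set L) := by
  have h : LieModule.lowerCentralSeries ℝ L L 1 = LieAlgebra.derivedSeries ℝ L 1 := by
    rw [LieModule.lowerCentralSeries_succ, LieModule.lowerCentralSeries_zero,
      LieAlgebra.derivedSeries_def, LieAlgebra.derivedSeriesOfIdeal_succ,
      LieAlgebra.derivedSeriesOfIdeal_zero]
  rw [h, n54_derived b h1 h2 h3 h0]

theorem n54_lcs2 (b : Basis (Fin 5) ℝ L)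
    (h1 : ⁅b 4, b 3⁆ = b 2) (h2 : ⁅b 4, b 2⁆ = b 1) (h3 : ⁅b 3, b 2⁆ = b 0)
    (h0 : ∀ i j : Fin 5, j < i → (i, j) ≠ (4, 3) → (i, j) ≠ (4, 2) → (i, j) ≠ (3, 2) →
      ⁅b i, b j⁆ = 0) :
    (LieModule.lowerCentralSeries ℝ L L 2).toSubmodule
      = Submodule.span ℝ ({b 0, b 1} : Set L) := by
  rw [show (2 : ℕ) = 1 + 1 from rfl, LieModule.lowerCentralSeries_succ,
    LieSubmodule.lieIdeal_oper_eq_linear_span']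
  apply le_antisymm
  · rw [Submodule.span_le]
    rintro _ ⟨x, -, y, hy, rfl⟩
    have hy' : y ∈ Submodule.span ℝ ({b 0, b 1, b 2} : Set L) := by
      rw [← n54_lcs1 b h1 h2 h3 h0]; exact hy
    obtain ⟨hy3, hy4⟩ := coordS1 b hy'
    rw [n54_bracket b h1 h2 h3 h0, hy3, hy4]
    refine Submodule.add_mem _ (Submodule.add_mem _ ?_ ?_) ?_
    · exact Submodule.smul_mem _ _ (Submodule.subset_span (by simp))
    · exact Submodule.smul_mem _ _ (Submodule.subset_span (by simp))
    · simp
  · rw [Submodule.span_le]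
    have hb2 : b 2 ∈ LieModule.lowerCentralSeries ℝ L L 1 := by
      have : b 2 ∈ (LieModule.lowerCentralSeries ℝ L L 1).toSubmodule := by
        rw [n54_lcs1 b h1 h2 h3 h0]
        exact Submodule.subset_span (by simp)
      exact this
    rintro x hx
    simp only [Set.mem_insert_iff, Set.mem_singleton_iff] at hx
    rcases hx with rfl | rfl
    · exact Submodule.subset_span ⟨b 3, trivial, b 2, hb2, h3⟩
    · exact Submodule.subset_span ⟨b 4, trivial, b 2, hb2, h2⟩

theorem n54_lcs3 (b : Basis (Fin 5) ℝ L)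
    (h1 : ⁅b 4, b 3⁆ = b 2) (h2 : ⁅b 4, b 2⁆ = b 1) (h3 : ⁅b 3, b 2⁆ = b 0)
    (h0 : ∀ i j : Fin 5, j < i → (i, j) ≠ (4, 3) → (i, j) ≠ (4, 2) → (i, j) ≠ (3, 2) →
      ⁅b i, b j⁆ = 0) :
    LieModule.lowerCentralSeries ℝ L L 3 = ⊥ := by
  rw [← LieSubmodule.toSubmodule_eq_bot,
    show (3 : ℕ) = 2 + 1 from rfl, LieModule.lowerCentralSeries_succ,
    LieSubmodule.lieIdeal_oper_eq_linear_span']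
  rw [← le_bot_iff, Submodule.span_le]
  rintro _ ⟨x, -, y, hy, rfl⟩
  have hy' : y ∈ Submodule.span ℝ ({b 0, b 1} : Set L) := by
    rw [← n54_lcs2 b h1 h2 h3 h0]; exact hy
  obtain ⟨hy2, hy3, hy4⟩ := coordS2 b hy'
  rw [n54_bracket b h1 h2 h3 h0, hy2, hy3, hy4]
  simp

theorem mem_coadjointIsotropy {ξ : Module.Dual ℝ L} {X : L} :
    X ∈ coadjointIsotropy ξ ↔ ∀ Y : L, ξ ⁅X, Y⁆ = 0 := Iff.rfl

theorem n54_xi_bracket (b : Basis (Fin 5) ℝ L)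
    (h1 : ⁅b 4, b 3⁆ = b 2) (h2 : ⁅b 4, b 2⁆ = b 1) (h3 : ⁅b 3, b 2⁆ = b 0)
    (h0 : ∀ i j : Fin 5, j < i → (i, j) ≠ (4, 3) → (i, j) ≠ (4, 2) → (i, j) ≠ (3, 2) →
      ⁅b i, b j⁆ = 0) (ξ : Module.Dual ℝ L) (X Y : L) :
    ξ ⁅X, Y⁆ = (b.repr X 3 * b.repr Y 2 - b.repr X 2 * b.repr Y 3) * ξ (b 0)
      + (b.repr X 4 * b.repr Y 2 - b.repr X 2 * b.repr Y 4) * ξ (b 1)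
      + (b.repr X 4 * b.repr Y 3 - b.repr X 3 * b.repr Y 4) * ξ (b 2) := by
  rw [n54_bracket b h1 h2 h3 h0, map_add, map_add, map_smul, map_smul, map_smul]
  simp [smul_eq_mul]

theorem n54_li (b : Basis (Fin 5) ℝ L) (ξ : Module.Dual ℝ L)
    (hne : ¬(ξ (b 0) = 0 ∧ ξ (b 1) = 0 ∧ ξ (b 2) = 0)) :
    LinearIndependent ℝ ![b 0, b 1, ξ (b 2) • b 2 - ξ (b 1) • b 3 + ξ (b 0) • b 4] := by
  rw [Fintype.linearIndependent_iff]
  intro g hg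
  rw [Fin.sum_univ_three] at hg
  simp only [Matrix.cons_val_zero, Matrix.cons_val_one, Matrix.head_cons, Matrix.cons_val_two,
    Matrix.tail_cons] at hg
  have hco : ∀ i, b.repr (g 0 • b 0 + g 1 • b 1
      + g 2 • (ξ (b 2) • b 2 - ξ (b 1) • b 3 + ξ (b 0) • b 4)) i = 0 := by
    rw [hg]; simp
  have h2' := hco 2
  have h3' := hco 3
  have h4' := hco 4
  simp [map_add, map_sub, map_smul, b.repr_self, Finsupp.single_apply] at h2' h3' h4'
  have hg2 : g 2 = 0 := by
    by_contra h
    refine hne ⟨?_, ?_, ?_⟩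
    · rcases h4' with h' | h' <;> tauto
    · rcases h3' with h' | h' <;> tauto
    · rcases h2' with h' | h' <;> tauto
  have h0' := hco 0
  have h1' := hco 1
  simp [map_add, map_sub, map_smul, b.repr_self, Finsupp.single_apply] at h0' h1'
  intro i
  fin_cases i
  · simpa using h0'
  · simpa using h1'
  · exact hg2

theorem n54_isotropy (b : Basis (Fin 5) ℝ L)
    (h1 : ⁅b 4, b 3⁆ = b 2) (h2 : ⁅b 4, b 2⁆ = b 1) (h3 : ⁅b 3, b 2⁆ = b 0)
    (h0 : ∀ i j : Fin 5, j < i → (i, j) ≠ (4, 3) → (i, j) ≠ (4, 2) → (i, j) ≠ (3, 2) →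
      ⁅b i, b j⁆ = 0) (ξ : Module.Dual ℝ L)
    (hne : ¬(ξ (b 0) = 0 ∧ ξ (b 1) = 0 ∧ ξ (b 2) = 0)) :
    coadjointIsotropy ξ
      = Submodule.span ℝ (Set.range ![b 0, b 1, ξ (b 2) • b 2 - ξ (b 1) • b 3 + ξ (b 0) • b 4]) := by
  have rsne : ∀ i j : Fin 5, i ≠ j → b.repr (b i) j = 0 := fun i j h => by
    rw [b.repr_self]; exact Finsupp.single_eq_of_ne' h
  have rseq : ∀ i : Fin 5, b.repr (b i) i = 1 := fun i => by
    rw [b.repr_self]; exact Finsupp.single_eq_same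
  have hw2 : b.repr (ξ (b 2) • b 2 - ξ (b 1) • b 3 + ξ (b 0) • b 4) 2 = ξ (b 2) := by
    simp only [map_add, map_sub, map_smul, Finsupp.add_apply, Finsupp.sub_apply,
      Finsupp.smul_apply, smul_eq_mul, rseq]
    rw [rsne 3 2 (by decide), rsne 4 2 (by decide)]
    ring
  have hw3 : b.repr (ξ (b 2) • b 2 - ξ (b 1) • b 3 + ξ (b 0) • b 4) 3 = -ξ (b 1) := by
    simp only [map_add, map_sub, map_smul, Finsupp.add_apply, Finsupp.sub_apply,
      Finsupp.smul_apply, smul_eq_mul, rseq]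
    rw [rsne 2 3 (by decide), rsne 4 3 (by decide)]
    ring
  have hw4 : b.repr (ξ (b 2) • b 2 - ξ (b 1) • b 3 + ξ (b 0) • b 4) 4 = ξ (b 0) := by
    simp only [map_add, map_sub, map_smul, Finsupp.add_apply, Finsupp.sub_apply,
      Finsupp.smul_apply, smul_eq_mul, rseq]
    rw [rsne 2 4 (by decide), rsne 3 4 (by decide)]
    ring
  apply le_antisymm
  · intro X hX
    rw [mem_coadjointIsotropy] at hX
    have E2 : b.repr X 3 * ξ (b 0) + b.repr X 4 * ξ (b 1) = 0 := by
      have h := hX (b 2)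
      rw [n54_xi_bracket b h1 h2 h3 h0, rseq 2, rsne 2 3 (by decide),
        rsne 2 4 (by decide)] at h
      linear_combination h
    have E3 : b.repr X 4 * ξ (b 2) - b.repr X 2 * ξ (b 0) = 0 := by
      have h := hX (b 3)
      rw [n54_xi_bracket b h1 h2 h3 h0, rseq 3, rsne 3 2 (by decide),
        rsne 3 4 (by decide)] at h
      linear_combination h
    have E4 : b.repr X 2 * ξ (b 1) + b.repr X 3 * ξ (b 2) = 0 := by
      have h := hX (b 4)
      rw [n54_xi_bracket b h1 h2 h3 h0, rseq 4, rsne 4 2 (by decide),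
        rsne 4 3 (by decide)] at h
      linear_combination -h
    have hmem : ∀ u : ℝ, X = b.repr X 0 • b 0 + b.repr X 1 • b 1
        + u • (ξ (b 2) • b 2 - ξ (b 1) • b 3 + ξ (b 0) • b 4) →
        X ∈ Submodule.span ℝ
          (Set.range ![b 0, b 1, ξ (b 2) • b 2 - ξ (b 1) • b 3 + ξ (b 0) • b 4]) := by
      intro u hXe
      rw [hXe]
      refine Submodule.add_mem _ (Submodule.add_mem _ ?_ ?_) ?_
      · exact Submodule.smul_mem _ _ (Submodule.subset_span ⟨0, rfl⟩)
      · exact Submodule.smul_mem _ _ (Submodule.subset_span ⟨1, rfl⟩)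
      · exact Submodule.smul_mem _ _ (Submodule.subset_span ⟨2, rfl⟩)
    have hcoord : ∀ u : ℝ,
        b.repr X 2 = u * ξ (b 2) → b.repr X 3 = u * (-ξ (b 1)) → b.repr X 4 = u * ξ (b 0) →
        X = b.repr X 0 • b 0 + b.repr X 1 • b 1
          + u • (ξ (b 2) • b 2 - ξ (b 1) • b 3 + ξ (b 0) • b 4) := by
      intro u hu2 hu3 hu4
      have hX5 := b.sum_repr X
      rw [Fin.sum_univ_five] at hX5
      conv_lhs => rw [← hX5]
      rw [hu2, hu3, hu4]
      module
    by_cases hcz : ξ (b 2) ≠ 0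
    · refine hmem (b.repr X 2 / ξ (b 2)) (hcoord _ ?_ ?_ ?_)
      · field_simp
      · field_simp
        linarith [E4]
      · field_simp
        linarith [E3]
    · push_neg at hcz
      by_cases haz : ξ (b 0) ≠ 0
      · refine hmem (b.repr X 4 / ξ (b 0)) (hcoord _ ?_ ?_ ?_)
        · rw [hcz, mul_zero]
          have := E3
          rw [hcz, mul_zero, zero_sub, neg_eq_zero] at this
          rcases mul_eq_zero.mp this with h' | h'
          · exact h'
          · exact absurd h' haz
        · field_simp
          linarith [E2]
        · field_simp
      · push_neg at haz
        have hbz : ξ (b 1) ≠ 0 := fun h => hne ⟨haz, h, hcz⟩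
        refine hmem (-(b.repr X 3) / ξ (b 1)) (hcoord _ ?_ ?_ ?_)
        · rw [hcz, mul_zero]
          have := E4
          rw [hcz, mul_zero, add_zero] at this
          rcases mul_eq_zero.mp this with h' | h'
          · exact h'
          · exact absurd h' hbz
        · field_simp
        · rw [haz, mul_zero]
          have := E2
          rw [haz, mul_zero, zero_add] at this
          rcases mul_eq_zero.mp this with h' | h'
          · exact h'
          · exact absurd h' hbz
  · rw [Submodule.span_le]
    rintro x ⟨i, rfl⟩
    have key : ∀ x : L, (∀ Y : L, ξ ⁅x, Y⁆ = 0) → x ∈ (coadjointIsotropy ξ : Set L) :=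
      fun x h => h
    fin_cases i
    · refine key _ fun Y => ?_
      show ξ ⁅b 0, Y⁆ = 0
      rw [n54_xi_bracket b h1 h2 h3 h0, rsne 0 2 (by decide), rsne 0 3 (by decide),
        rsne 0 4 (by decide)]
      ring
    · refine key _ fun Y => ?_
      show ξ ⁅b 1, Y⁆ = 0
      rw [n54_xi_bracket b h1 h2 h3 h0, rsne 1 2 (by decide), rsne 1 3 (by decide),
        rsne 1 4 (by decide)]
      ring
    · refine key _ fun Y => ?_
      show ξ ⁅ξ (b 2) • b 2 - ξ (b 1) • b 3 + ξ (b 0) • b 4, Y⁆ = 0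
      rw [n54_xi_bracket b h1 h2 h3 h0, hw2, hw3, hw4]
      ring

theorem n54_vanish_iff (b : Basis (Fin 5) ℝ L)
    (h1 : ⁅b 4, b 3⁆ = b 2) (h2 : ⁅b 4, b 2⁆ = b 1) (h3 : ⁅b 3, b 2⁆ = b 0)
    (h0 : ∀ i j : Fin 5, j < i → (i, j) ≠ (4, 3) → (i, j) ≠ (4, 2) → (i, j) ≠ (3, 2) →
      ⁅b i, b j⁆ = 0) (ξ : Module.Dual ℝ L) :
    (∀ x ∈ LieAlgebra.derivedSeries ℝ L 1, ξ x = 0)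
      ↔ (ξ (b 0) = 0 ∧ ξ (b 1) = 0 ∧ ξ (b 2) = 0) := by
  have hmem : ∀ i : Fin 5, b i ∈ ({b 0, b 1, b 2} : Set L) →
      b i ∈ LieAlgebra.derivedSeries ℝ L 1 := by
    intro i hi
    rw [← LieSubmodule.mem_toSubmodule, n54_derived b h1 h2 h3 h0]
    exact Submodule.subset_span hi
  constructor
  · intro h
    exact ⟨h _ (hmem 0 (by simp)), h _ (hmem 1 (by simp)), h _ (hmem 2 (by simp))⟩
  · rintro ⟨hA, hB, hC⟩ x hx
    have hx' : x ∈ Submodule.span ℝ ({b 0, b 1, b 2} : Set L) := by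
      rw [← n54_derived b h1 h2 h3 h0]; exact hx
    refine Submodule.span_induction ?_ ?_ ?_ ?_ hx'
    · rintro y hy
      simp only [Set.mem_insert_iff, Set.mem_singleton_iff] at hy
      rcases hy with rfl | rfl | rfl <;> assumption
    · simp
    · intro y z _ _ hy hz; rw [map_add, hy, hz, add_zero]
    · intro t y _ hy; rw [map_smul, hy, smul_zero]

theorem n54_isotropy_rank (b : Basis (Fin 5) ℝ L)
    (h1 : ⁅b 4, b 3⁆ = b 2) (h2 : ⁅b 4, b 2⁆ = b 1) (h3 : ⁅b 3, b 2⁆ = b 0)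
    (h0 : ∀ i j : Fin 5, j < i → (i, j) ≠ (4, 3) → (i, j) ≠ (4, 2) → (i, j) ≠ (3, 2) →
      ⁅b i, b j⁆ = 0) (ξ : Module.Dual ℝ L)
    (hξ : ¬ (∀ x ∈ LieAlgebra.derivedSeries ℝ L 1, ξ x = 0)) :
    finrank ℝ (coadjointIsotropy ξ) = 3 := by
  rw [n54_vanish_iff b h1 h2 h3 h0] at hξ
  rw [n54_isotropy b h1 h2 h3 h0 ξ hξ, finrank_span_eq_card (n54_li b ξ hξ)]
  simp

end Aux

/-- The Lie algebra `n₅,₄` (basis `X₁,…,X₅`, nonzero brackets `[X₅,X₄]=X₃`, `[X₅,X₃]=X₂`,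
`[X₄,X₃]=X₁`; here `b i` corresponds to `X_{i+1}`) is 3-step nilpotent, has `dim [g,g] = 3`,
every `ξ` not vanishing on `[g,g]` has `dim g(ξ) = 3`, `ind g = 3`, and `g` is of class `T`. -/
theorem stmt_17 {L : Type*} [LieRing L] [LieAlgebra ℝ L] [FiniteDimensional ℝ L]
    (b : Basis (Fin 5) ℝ L)
    (h1 : ⁅b 4, b 3⁆ = b 2) (h2 : ⁅b 4, b 2⁆ = b 1) (h3 : ⁅b 3, b 2⁆ = b 0)
    (h0 : ∀ i j : Fin 5, j < i → (i, j) ≠ (4, 3) → (i, j) ≠ (4, 2) → (i, j) ≠ (3, 2) →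
      ⁅b i, b j⁆ = 0) :
    LieModule.lowerCentralSeries ℝ L L 3 = ⊥ ∧
    LieModule.lowerCentralSeries ℝ L L 2 ≠ ⊥ ∧
    finrank ℝ (LieAlgebra.derivedSeries ℝ L 1).toSubmodule = 3 ∧
    (∀ ξ : Module.Dual ℝ L,
      ¬ (∀ x ∈ LieAlgebra.derivedSeries ℝ L 1, ξ x = 0) →
        finrank ℝ (coadjointIsotropy ξ) = 3) ∧
    lieIndex L = 3 ∧ IsClassT L := by
  have hlcs2ne : LieModule.lowerCentralSeries ℝ L L 2 ≠ ⊥ := by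
    intro hbot
    have hb0 : b 0 ∈ (LieModule.lowerCentralSeries ℝ L L 2).toSubmodule := by
      rw [n54_lcs2 b h1 h2 h3 h0]
      exact Submodule.subset_span (by simp)
    rw [hbot] at hb0
    exact b.ne_zero 0 (by simpa using hb0)
  have hfr : finrank ℝ (LieAlgebra.derivedSeries ℝ L 1).toSubmodule = 3 := by
    rw [n54_derived b h1 h2 h3 h0]
    have hcomp : (b ∘ ![0, 1, 2]) = ![b 0, b 1, b 2] := by
      funext i; fin_cases i <;> rfl
    have hli : LinearIndependent ℝ ![b 0, b 1, b 2] := by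
      rw [← hcomp]
      exact b.linearIndependent.comp ![0, 1, 2] (by decide)
    have hrange : Set.range ![b 0, b 1, b 2] = ({b 0, b 1, b 2} : Set L) := by
      ext x
      constructor
      · rintro ⟨i, rfl⟩; fin_cases i <;> simp
      · rintro (rfl | rfl | rfl)
        exacts [⟨0, rfl⟩, ⟨1, rfl⟩, ⟨2, rfl⟩]
    rw [← hrange, finrank_span_eq_card hli]
    simp
  have hfrL : finrank ℝ L = 5 := by
    rw [finrank_eq_card_basis b]; simp
  have hξ0 : ¬ (∀ x ∈ LieAlgebra.derivedSeries ℝ L 1, (b.coord 2) x = 0) := by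
    intro h
    obtain ⟨-, -, hcc⟩ := (n54_vanish_iff b h1 h2 h3 h0 (b.coord 2)).mp h
    rw [Basis.coord_apply, b.repr_self, Finsupp.single_eq_same] at hcc
    norm_num at hcc
  have hindex : lieIndex L = 3 := by
    show sInf (Set.range fun ξ : Module.Dual ℝ L => finrank ℝ (coadjointIsotropy ξ)) = 3
    apply le_antisymm
    · exact Nat.sInf_le ⟨b.coord 2, n54_isotropy_rank b h1 h2 h3 h0 _ hξ0⟩
    · apply le_csInf (Set.range_nonempty _)
      rintro n ⟨ξ, rfl⟩
      show 3 ≤ finrank ℝ (coadjointIsotropy ξ)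
      by_cases hv : ∀ x ∈ LieAlgebra.derivedSeries ℝ L 1, ξ x = 0
      · obtain ⟨hA, hB, hC⟩ := (n54_vanish_iff b h1 h2 h3 h0 ξ).mp hv
        have htop : coadjointIsotropy ξ = ⊤ := by
          rw [eq_top_iff]
          intro X _ Y
          rw [n54_xi_bracket b h1 h2 h3 h0, hA, hB, hC]
          ring
        rw [htop, finrank_top, hfrL]
        omega
      · rw [n54_isotropy_rank b h1 h2 h3 h0 ξ hv]
  refine ⟨n54_lcs3 b h1 h2 h3 h0, hlcs2ne, hfr, n54_isotropy_rank b h1 h2 h3 h0, hindex, ?_⟩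
  intro ξ hξ
  rw [hindex]
  exact n54_isotropy_rank b h1 h2 h3 h0 ξ hξ
end
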